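/- Let H = L + W with L the complete graph Laplacian on V vertices, W diagonal with unique smallest eigenvalue W_m = 0 at vertex m, and suppose the ratio of the largest to second-smallest diagonal entry of W is at most κ. Then the spectral gap γ = λ₁ − λ₀ satisfies γ ≥ g_{{m}}, where g_{{m}} = (Σ_{v≠m} φ₀(v))/φ₀(m) is the Cheeger-type ratio of the singleton cut at m with respect to the positive ground state φ₀. -/

import Mathlib

open Matrix

/-- The `i`-th smallest eigenvalue (with multiplicity) of a Hermitian matrix. -/
noncomputable def sortedEig {n : ℕ} {A : Matrix (Fin n) (Fin n) ℝ}
    (hA : A.IsHermitian) (i : Fin n) : ℝ :=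
  hA.eigenvalues (Tuple.sort hA.eigenvalues i)

/-- The spectral gap: difference between the two lowest eigenvalues. -/
noncomputable def specGap {n : ℕ} (hn : 2 ≤ n) {A : Matrix (Fin n) (Fin n) ℝ}
    (hA : A.IsHermitian) : ℝ :=
  sortedEig hA ⟨1, by omega⟩ - sortedEig hA ⟨0, by omega⟩

/-- The combinatorial Laplacian of the complete graph on `V` vertices:
`L = V·I − J`, where `J` is the all-ones matrix. -/
def cgL (V : ℕ) : Matrix (Fin V) (Fin V) ℝ :=
  (V : ℝ) • (1 : Matrix (Fin V) (Fin V) ℝ) - Matrix.of (fun _ _ => (1 : ℝ))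

-- component formula for eigenvector equations of H = cgL + diagonal W
lemma comp_eq {V : ℕ} (W : Fin V → ℝ) (ψ : Fin V → ℝ) (lam : ℝ)
    (h : (cgL V + Matrix.diagonal W).mulVec ψ = lam • ψ) (u : Fin V) :
    ((V : ℝ) + W u - lam) * ψ u = ∑ x, ψ x := by
  have h1 := congrFun h u
  rw [Matrix.add_mulVec] at h1
  have hA : (cgL V).mulVec ψ u = (V : ℝ) * ψ u - ∑ x, ψ x := by
    simp [cgL, Matrix.mulVec, dotProduct, Matrix.one_apply, sub_mul, mul_ite,
      mul_one, mul_zero, ite_mul, zero_mul, Finset.sum_sub_distrib, Finset.sum_ite_eq]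
  have hB : (Matrix.diagonal W).mulVec ψ u = W u * ψ u := Matrix.mulVec_diagonal W ψ u
  simp only [Pi.add_apply, hA, hB, Pi.smul_apply, smul_eq_mul] at h1
  linarith

set_option linter.unusedVariables false in
/-- For `H = L + W` on the complete graph with `W m = 0` the unique
smallest eigenvalue of `W` and spectral ratio of `W` at most `κ`, the spectral gap
satisfies `γ ≥ g_{{m}} = (Σ_{v≠m} φ₀(v))/φ₀(m)` for the positive ground state `φ₀`. -/
theorem gap_ge_g {V : ℕ} (hV : 2 ≤ V) (W : Fin V → ℝ) (m : Fin V) (κ : ℝ)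
    (hWm : W m = 0) (hmin : ∀ u : Fin V, u ≠ m → 0 < W u)
    (hratio : ∀ u v : Fin V, u ≠ m → v ≠ m → W u ≤ κ * W v)
    (hH : (cgL V + Matrix.diagonal W).IsHermitian)
    (φ₀ : Fin V → ℝ) (hpos : ∀ u, 0 < φ₀ u)
    (hEig : (cgL V + Matrix.diagonal W).mulVec φ₀ = sortedEig hH ⟨0, by omega⟩ • φ₀) :
    (∑ v ∈ Finset.univ.erase m, φ₀ v) / φ₀ m ≤ specGap hV hH := by
  classical
  have hnt : Nontrivial (Fin V) := Fin.nontrivial_iff_two_le.mpr hV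
  set lam0 := sortedEig hH ⟨0, by omega⟩ with hl0
  set lam1 := sortedEig hH ⟨1, by omega⟩ with hl1
  have hWnn : ∀ u, 0 ≤ W u := by
    intro u; by_cases h : u = m
    · simp [h, hWm]
    · exact (hmin u h).le
  have hm := comp_eq W φ₀ lam0 hEig m
  rw [hWm] at hm
  have hsplit : ∑ x, φ₀ x = φ₀ m + ∑ x ∈ Finset.univ.erase m, φ₀ x := by
    rw [add_comm]; exact (Finset.sum_erase_add _ _ (Finset.mem_univ m)).symm
  have herpos : 0 < ∑ x ∈ Finset.univ.erase m, φ₀ x := by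
    apply Finset.sum_pos (fun i _ => hpos i)
    obtain ⟨u, hu⟩ := exists_ne m
    exact ⟨u, Finset.mem_erase.mpr ⟨hu, Finset.mem_univ u⟩⟩
  have hlam0lt : lam0 < V := by nlinarith [hpos m]
  have hkey : (V : ℝ) ≤ lam1 := by
    by_contra hc
    push_neg at hc
    have hmono := Tuple.monotone_sort hH.eigenvalues
    have h01 : lam0 ≤ lam1 :=
      hmono (show (⟨0, by omega⟩ : Fin V) ≤ ⟨1, by omega⟩ by simp [Fin.le_def])
    set i0 := Tuple.sort hH.eigenvalues ⟨0, by omega⟩ with hi0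
    set i1 := Tuple.sort hH.eigenvalues ⟨1, by omega⟩ with hi1
    have hne : i0 ≠ i1 := by
      intro h
      have := (Tuple.sort hH.eigenvalues).injective h
      simp [Fin.ext_iff] at this
    set v0 : Fin V → ℝ := ⇑(hH.eigenvectorBasis i0) with hv0def
    set v1 : Fin V → ℝ := ⇑(hH.eigenvectorBasis i1) with hv1def
    have hc0 := comp_eq W v0 lam0 (hH.mulVec_eigenvectorBasis i0)
    have hc1 := comp_eq W v1 lam1 (hH.mulVec_eigenvectorBasis i1)
    set s0 := ∑ x, v0 x with hs0
    set s1 := ∑ x, v1 x with hs1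
    have hD0 : ∀ u, 0 < (V : ℝ) + W u - lam0 := fun u => by
      have := hWnn u; linarith
    have hD1 : ∀ u, 0 < (V : ℝ) + W u - lam1 := fun u => by
      have := hWnn u; linarith
    have hv0u : ∀ u, v0 u = s0 / ((V : ℝ) + W u - lam0) := fun u => by
      rw [eq_div_iff (hD0 u).ne', mul_comm]; exact hc0 u
    have hv1u : ∀ u, v1 u = s1 / ((V : ℝ) + W u - lam1) := fun u => by
      rw [eq_div_iff (hD1 u).ne', mul_comm]; exact hc1 u
    have horth : ∑ u, v0 u * v1 u = 0 := by
      have h2 := hH.eigenvectorBasis.orthonormal.2 hne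
      simp [PiLp.inner_apply, RCLike.inner_apply, starRingEnd_apply] at h2
      rw [← h2]
      exact Finset.sum_congr rfl (fun x _ => mul_comm _ _)
    have hsum : ∑ u, v0 u * v1 u
        = s0 * s1 * ∑ u, (((V : ℝ) + W u - lam0) * ((V : ℝ) + W u - lam1))⁻¹ := by
      rw [Finset.mul_sum]
      apply Finset.sum_congr rfl
      intro u _
      rw [hv0u u, hv1u u]
      field_simp
    have hsumpos : 0 < ∑ u, (((V : ℝ) + W u - lam0) * ((V : ℝ) + W u - lam1))⁻¹ := by
      apply Finset.sum_pos (fun u _ => inv_pos.mpr (mul_pos (hD0 u) (hD1 u)))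
      exact Finset.univ_nonempty
    have hprod : s0 * s1 = 0 := by
      have h0 := hsum.symm.trans horth
      exact (mul_eq_zero.mp h0).resolve_right hsumpos.ne'
    rcases mul_eq_zero.mp hprod with h | h
    · exact hH.eigenvectorBasis.orthonormal.ne_zero i0 (by
        ext u
        have := hv0u u
        rw [h, zero_div] at this
        exact this)
    · exact hH.eigenvectorBasis.orthonormal.ne_zero i1 (by
        ext u
        have := hv1u u
        rw [h, zero_div] at this
        exact this)
  have hfin : (∑ v ∈ Finset.univ.erase m, φ₀ v) = ((V : ℝ) - 1 - lam0) * φ₀ m := by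
    rw [hsplit] at hm; linarith
  have hgap : specGap hV hH = lam1 - lam0 := rfl
  rw [hfin, hgap, mul_div_assoc, div_self (hpos m).ne', mul_one]
  linarith
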